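/- (q-binomial theorem) For all complex a, x, q with |x| < 1 and |q| < 1, ∑_{k=0}^∞ ((a;q)_k / (q;q)_k) x^k = (ax;q)_∞ / (x;q)_∞, where (a;q)_k = ∏_{i=0}^{k-1}(1 - a q^i) and (a;q)_∞ = ∏_{i=0}^∞ (1 - a q^i). -/

import Mathlib

open Finset

/-- The finite q-Pochhammer symbol `(a;q)_k = ∏_{i=0}^{k-1} (1 - a q^i)`. -/
noncomputable def qPoch (a q : ℂ) (k : ℕ) : ℂ :=
  ∏ i ∈ Finset.range k, (1 - a * q ^ i)

/-- The infinite q-Pochhammer symbol `(a;q)_∞ = ∏_{i=0}^∞ (1 - a q^i)`. -/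
noncomputable def qPochInf (a q : ℂ) : ℂ :=
  ∏' i : ℕ, (1 - a * q ^ i)

open Complex Filter Topology

lemma one_sub_ne_zero' {z : ℂ} (h : ‖z‖ < 1) : (1 : ℂ) - z ≠ 0 := by
  intro h0
  rw [sub_eq_zero] at h0
  rw [← h0] at h
  simp at h

lemma qPoch_q_ne_zero {q : ℂ} (hq : ‖q‖ < 1) (k : ℕ) : qPoch q q k ≠ 0 := by
  rw [qPoch, Finset.prod_ne_zero_iff]
  intro i _
  apply one_sub_ne_zero'
  rw [norm_mul, norm_pow]
  calc ‖q‖ * ‖q‖ ^ i ≤ ‖q‖ * 1 :=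
        mul_le_mul_of_nonneg_left (pow_le_one₀ (norm_nonneg _) hq.le) (norm_nonneg _)
    _ = ‖q‖ := mul_one _
    _ < 1 := hq

/-- The bound for the coefficients. -/
noncomputable def qcBound (a q : ℂ) : ℝ :=
  Real.exp ((‖a‖ + ‖q‖ / (1 - ‖q‖)) * (1 - ‖q‖)⁻¹)

lemma qcBound_nonneg (a q : ℂ) : 0 ≤ qcBound a q := (Real.exp_pos _).le

lemma norm_qc_le (a q : ℂ) (hq : ‖q‖ < 1) (k : ℕ) :
    ‖qPoch a q k / qPoch q q k‖ ≤ qcBound a q := by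
  set t : ℝ := ‖q‖ with ht
  have ht0 : 0 ≤ t := norm_nonneg q
  have ht1 : 0 < 1 - t := by linarith
  have hquot : qPoch a q k / qPoch q q k
      = ∏ i ∈ Finset.range k, ((1 - a * q ^ i) / (1 - q * q ^ i)) := by
    rw [qPoch, qPoch, Finset.prod_div_distrib]
  rw [hquot, norm_prod]
  have hfac : ∀ i ∈ Finset.range k,
      ‖(1 - a * q ^ i) / (1 - q * q ^ i)‖
        ≤ Real.exp ((‖a‖ + t / (1 - t)) * t ^ i) := by
    intro i _
    have hv : ‖q * q ^ i‖ = t * t ^ i := by rw [norm_mul, norm_pow]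
    have hv1 : t * t ^ i ≤ t := by
      calc t * t ^ i ≤ t * 1 := by
            apply mul_le_mul_of_nonneg_left (pow_le_one₀ ht0 hq.le) ht0
        _ = t := mul_one t
    have hvlt : t * t ^ i < 1 := lt_of_le_of_lt hv1 hq
    have hden : 1 - t * t ^ i ≤ ‖1 - q * q ^ i‖ := by
      have := norm_sub_norm_le (1 : ℂ) (q * q ^ i)
      rw [norm_one, hv] at this
      exact this
    have hdenpos : 0 < 1 - t * t ^ i := by linarith
    have hnum : ‖1 - a * q ^ i‖ ≤ 1 + ‖a‖ * t ^ i := by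
      calc ‖1 - a * q ^ i‖ ≤ ‖(1 : ℂ)‖ + ‖a * q ^ i‖ := norm_sub_le _ _
        _ = 1 + ‖a‖ * t ^ i := by rw [norm_one, norm_mul, norm_pow]
    have step1 : ‖(1 - a * q ^ i) / (1 - q * q ^ i)‖
        ≤ (1 + ‖a‖ * t ^ i) / (1 - t * t ^ i) := by
      rw [norm_div]
      apply div_le_div₀ (by positivity) hnum hdenpos hden
    have e1 : 1 + ‖a‖ * t ^ i ≤ Real.exp (‖a‖ * t ^ i) := by
      have := Real.add_one_le_exp (‖a‖ * t ^ i)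
      linarith
    have e2 : (1 - t * t ^ i)⁻¹ ≤ Real.exp (t / (1 - t) * t ^ i) := by
      have hw0 : 0 ≤ t / (1 - t) * t ^ i := by positivity
      have e2a : 1 + t / (1 - t) * t ^ i ≤ Real.exp (t / (1 - t) * t ^ i) := by
        have := Real.add_one_le_exp (t / (1 - t) * t ^ i)
        linarith
      have e2b : (1 - t * t ^ i)⁻¹ ≤ 1 + t / (1 - t) * t ^ i := by
        rw [inv_eq_one_div, div_le_iff₀ hdenpos]
        have hveq : t / (1 - t) * (1 - t) = t := div_mul_cancel₀ t (by linarith)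
        have htpow : 0 ≤ t ^ i := by positivity
        nlinarith [mul_nonneg (mul_nonneg (div_nonneg ht0 ht1.le) htpow)
          (sub_nonneg.mpr hv1), (pow_le_one₀ ht0 hq.le : t ^ i ≤ 1)]
      linarith
    calc ‖(1 - a * q ^ i) / (1 - q * q ^ i)‖
        ≤ (1 + ‖a‖ * t ^ i) / (1 - t * t ^ i) := step1
      _ = (1 + ‖a‖ * t ^ i) * (1 - t * t ^ i)⁻¹ := div_eq_mul_inv _ _
      _ ≤ Real.exp (‖a‖ * t ^ i) * Real.exp (t / (1 - t) * t ^ i) := by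
          apply mul_le_mul e1 e2 (by positivity) (Real.exp_pos _).le
      _ = Real.exp ((‖a‖ + t / (1 - t)) * t ^ i) := by
          rw [← Real.exp_add]; ring_nf
  calc ∏ i ∈ Finset.range k, ‖(1 - a * q ^ i) / (1 - q * q ^ i)‖
      ≤ ∏ i ∈ Finset.range k, Real.exp ((‖a‖ + t / (1 - t)) * t ^ i) :=
        Finset.prod_le_prod (fun i _ => norm_nonneg _) hfac
    _ = Real.exp (∑ i ∈ Finset.range k, (‖a‖ + t / (1 - t)) * t ^ i) :=
        (Real.exp_sum _ _).symm
    _ ≤ qcBound a q := by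
        rw [qcBound]
        apply Real.exp_le_exp.mpr
        rw [← Finset.mul_sum]
        have hgeom : ∑ i ∈ Finset.range k, t ^ i ≤ (1 - t)⁻¹ := by
          have hs : Summable (fun i : ℕ => t ^ i) := summable_geometric_of_lt_one ht0 hq
          calc ∑ i ∈ Finset.range k, t ^ i ≤ ∑' i : ℕ, t ^ i :=
                Summable.sum_le_tsum _ (fun i _ => by positivity) hs
            _ = (1 - t)⁻¹ := tsum_geometric_of_lt_one ht0 hq
        have hcn : 0 ≤ ‖a‖ + t / (1 - t) := by positivity
        exact mul_le_mul_of_nonneg_left hgeom hcn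

lemma summable_qc (a q y : ℂ) (hq : ‖q‖ < 1) (hy : ‖y‖ < 1) :
    Summable (fun k : ℕ => qPoch a q k / qPoch q q k * y ^ k) := by
  apply Summable.of_norm_bounded (g := fun k => qcBound a q * ‖y‖ ^ k)
    ((summable_geometric_of_lt_one (norm_nonneg y) hy).mul_left _)
  intro k
  rw [norm_mul, norm_pow]
  exact mul_le_mul_of_nonneg_right (norm_qc_le a q hq k) (by positivity)

lemma qc_rec (a q : ℂ) (hq : ‖q‖ < 1) (k : ℕ) :
    qPoch a q (k + 1) / qPoch q q (k + 1) * (1 - q ^ (k + 1))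
      = qPoch a q k / qPoch q q k * (1 - a * q ^ k) := by
  have hd : qPoch q q k ≠ 0 := qPoch_q_ne_zero hq k
  have hqk : (1 : ℂ) - q ^ (k + 1) ≠ 0 := by
    apply one_sub_ne_zero'
    rw [norm_pow]
    exact pow_lt_one₀ (norm_nonneg q) hq (Nat.succ_ne_zero k)
  have e1 : qPoch a q (k + 1) = qPoch a q k * (1 - a * q ^ k) :=
    Finset.prod_range_succ _ _
  have e2 : qPoch q q (k + 1) = qPoch q q k * (1 - q ^ (k + 1)) := by
    rw [qPoch, Finset.prod_range_succ, ← qPoch, pow_succ']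
  rw [e1, e2]
  field_simp

lemma summable_u (a q y : ℂ) (hq : ‖q‖ < 1) (hy : ‖y‖ < 1) :
    Summable (fun k : ℕ => qPoch a q k / qPoch q q k * (1 - q ^ k) * y ^ k) := by
  apply Summable.of_norm_bounded (g := fun k => qcBound a q * 2 * ‖y‖ ^ k)
    ((summable_geometric_of_lt_one (norm_nonneg y) hy).mul_left _)
  intro k
  rw [norm_mul, norm_mul, norm_pow]
  have h2 : ‖(1 : ℂ) - q ^ k‖ ≤ 2 := by
    calc ‖(1 : ℂ) - q ^ k‖ ≤ ‖(1 : ℂ)‖ + ‖q ^ k‖ := norm_sub_le _ _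
      _ ≤ 1 + 1 := by
          rw [norm_one, norm_pow]
          have := pow_le_one₀ (norm_nonneg q) hq.le (n := k)
          linarith
      _ = 2 := by norm_num
  calc ‖qPoch a q k / qPoch q q k‖ * ‖(1 : ℂ) - q ^ k‖ * ‖y‖ ^ k
      ≤ qcBound a q * 2 * ‖y‖ ^ k := by
        apply mul_le_mul_of_nonneg_right _ (by positivity)
        exact mul_le_mul (norm_qc_le a q hq k) h2 (norm_nonneg _) (qcBound_nonneg a q)

/-- The functional equation `F(y)(1-y) = F(qy)(1-ay)`. -/
lemma feq (a q : ℂ) (hq : ‖q‖ < 1) (y : ℂ) (hy : ‖y‖ < 1) :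
    (∑' k : ℕ, qPoch a q k / qPoch q q k * y ^ k) * (1 - y)
      = (∑' k : ℕ, qPoch a q k / qPoch q q k * (q * y) ^ k) * (1 - a * y) := by
  set c : ℕ → ℂ := fun k => qPoch a q k / qPoch q q k with hc
  have hqy : ‖q * y‖ < 1 := by
    rw [norm_mul]
    nlinarith [norm_nonneg q, norm_nonneg y]
  have h1 : Summable (fun k => c k * y ^ k) := summable_qc a q y hq hy
  have h3 : Summable (fun k => c k * (q * y) ^ k) := summable_qc a q (q * y) hq hqy
  set u : ℕ → ℂ := fun k => c k * (1 - q ^ k) * y ^ k with hu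
  have hsu : Summable u := summable_u a q y hq hy
  have hsu' : Summable (fun k => u (k + 1)) := (summable_nat_add_iff 1).2 hsu
  have key : ∀ k : ℕ, c k * y ^ k * (1 - y) - c k * (q * y) ^ k * (1 - a * y)
      = u k - u (k + 1) := by
    intro k
    have hrec : c (k + 1) * (1 - q ^ (k + 1)) = c k * (1 - a * q ^ k) := qc_rec a q hq k
    have : u (k + 1) = c k * (1 - a * q ^ k) * y ^ (k + 1) := by
      rw [hu]; dsimp only; rw [show c (k+1) * (1 - q ^ (k+1)) * y ^ (k+1)
        = (c (k+1) * (1 - q ^ (k+1))) * y ^ (k+1) by ring, hrec]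
    rw [this, hu]
    dsimp only
    ring
  have sum_eq : (∑' k : ℕ, c k * y ^ k) * (1 - y)
      - (∑' k : ℕ, c k * (q * y) ^ k) * (1 - a * y)
      = ∑' k : ℕ, (u k - u (k + 1)) := by
    rw [← tsum_mul_right, ← tsum_mul_right,
      ← Summable.tsum_sub (h1.mul_right _) (h3.mul_right _)]
    exact tsum_congr key
  have tele : ∑' k : ℕ, (u k - u (k + 1)) = 0 := by
    rw [Summable.tsum_sub hsu hsu']
    have h0 : ∑' k : ℕ, u k = u 0 + ∑' k : ℕ, u (k + 1) := Summable.tsum_eq_zero_add hsu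
    have hu0 : u 0 = 0 := by simp [hu]
    rw [h0, hu0]
    ring
  exact sub_eq_zero.mp (sum_eq.trans tele)

set_option maxHeartbeats 1000000 in
/-- Existence of infinite products and nonvanishing. -/
lemma hasProd_one_sub (c q : ℂ) (hq : ‖q‖ < 1) :
    HasProd (fun i : ℕ => 1 - c * q ^ i) (qPochInf c q)
      ∧ ((∀ i : ℕ, (1 : ℂ) - c * q ^ i ≠ 0) → qPochInf c q ≠ 0) := by
  have h0 : Tendsto (fun i : ℕ => c * q ^ i) atTop (𝓝 0) := by
    have h0' : Tendsto (fun i : ℕ => q ^ i) atTop (𝓝 (0 : ℂ)) :=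
      tendsto_pow_atTop_nhds_zero_of_norm_lt_one hq
    have := h0'.const_mul c
    rwa [mul_zero] at this
  have h1 : ∀ᶠ i in atTop, ‖c * q ^ i‖ ≤ 1 / 2 := by
    have := h0.norm
    simp only [norm_zero] at this
    exact this.eventually_le_const (by norm_num)
  obtain ⟨N, hN⟩ := eventually_atTop.mp h1
  set g : ℕ → ℂ := fun n => 1 - c * q ^ (n + N) with hg
  have hbnd : ∀ n : ℕ, ‖c * q ^ (n + N)‖ ≤ 1 / 2 := fun n => hN _ (Nat.le_add_left N n)
  have hg0 : ∀ n, g n ≠ 0 := by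
    intro n
    exact one_sub_ne_zero' (lt_of_le_of_lt (hbnd n) (by norm_num))
  have hlog : Summable (fun n => Complex.log (g n)) := by
    apply Summable.of_norm_bounded (g := fun n => 3 / 2 * (‖c * q ^ N‖ * ‖q‖ ^ n))
      (((summable_geometric_of_lt_one (norm_nonneg q) hq).mul_left _).mul_left _)
    intro n
    have heq : g n = 1 + -(c * q ^ (n + N)) := by rw [hg]; ring
    calc ‖Complex.log (g n)‖ = ‖Complex.log (1 + -(c * q ^ (n + N)))‖ := by rw [heq]
      _ ≤ 3 / 2 * ‖-(c * q ^ (n + N))‖ :=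
          Complex.norm_log_one_add_half_le_self (by simpa using hbnd n)
      _ = 3 / 2 * (‖c * q ^ N‖ * ‖q‖ ^ n) := by
          rw [norm_neg, show c * q ^ (n + N) = c * q ^ N * q ^ n by
            rw [pow_add]; ring, norm_mul (c * q ^ N), norm_pow]
  have hgP : HasProd g (Complex.exp (∑' n, Complex.log (g n))) := by
    have h := hlog.hasSum.cexp
    rwa [show (Complex.exp ∘ fun n => Complex.log (g n)) = g from
      funext fun n => Complex.exp_log (hg0 n)] at h
  have hProd : HasProd (fun i : ℕ => 1 - c * q ^ i)
      ((∏ i ∈ Finset.range N, (1 - c * q ^ i)) * Complex.exp (∑' n, Complex.log (g n))) :=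
    hgP.prod_range_mul
  have htp : qPochInf c q
      = (∏ i ∈ Finset.range N, (1 - c * q ^ i)) * Complex.exp (∑' n, Complex.log (g n)) := by
    rw [qPochInf]
    exact hProd.tprod_eq
  constructor
  · rw [show qPochInf c q = ∏' i : ℕ, (1 - c * q ^ i) from rfl]
    exact hProd.multipliable.hasProd
  · intro hall
    rw [htp]
    exact mul_ne_zero (Finset.prod_ne_zero_iff.2 fun i _ => hall i) (Complex.exp_ne_zero _)

/-- The q-binomial theorem: for `|x| < 1` and `|q| < 1`,
`∑_k ((a;q)_k/(q;q)_k) x^k = (ax;q)_∞/(x;q)_∞`. -/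
theorem stmt11 (a x q : ℂ) (hx : ‖x‖ < 1) (hq : ‖q‖ < 1) :
    ∑' k : ℕ, (qPoch a q k / qPoch q q k) * x ^ k
      = qPochInf (a * x) q / qPochInf x q := by
  set F : ℂ → ℂ := fun y => ∑' k : ℕ, qPoch a q k / qPoch q q k * y ^ k with hF
  have hnx : ∀ n : ℕ, ‖q ^ n * x‖ ≤ ‖x‖ := by
    intro n
    rw [norm_mul, norm_pow]
    calc ‖q‖ ^ n * ‖x‖ ≤ 1 * ‖x‖ :=
          mul_le_mul_of_nonneg_right (pow_le_one₀ (norm_nonneg q) hq.le) (norm_nonneg x)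
      _ = ‖x‖ := one_mul _
  have hnx1 : ∀ n : ℕ, ‖q ^ n * x‖ < 1 := fun n => lt_of_le_of_lt (hnx n) hx
  -- the iterated functional equation
  have key : ∀ n : ℕ, F x * qPoch x q n = F (q ^ n * x) * qPoch (a * x) q n := by
    intro n
    induction n with
    | zero => simp [qPoch]
    | succ n ih =>
      have hfe := feq a q hq (q ^ n * x) (hnx1 n)
      have e1 : qPoch x q (n + 1) = qPoch x q n * (1 - x * q ^ n) :=
        Finset.prod_range_succ _ _
      have e2 : qPoch (a * x) q (n + 1) = qPoch (a * x) q n * (1 - a * x * q ^ n) :=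
        Finset.prod_range_succ _ _
      have hq1 : q * (q ^ n * x) = q ^ (n + 1) * x := by ring
      calc F x * qPoch x q (n + 1)
          = F x * qPoch x q n * (1 - x * q ^ n) := by rw [e1]; ring
        _ = F (q ^ n * x) * qPoch (a * x) q n * (1 - x * q ^ n) := by rw [ih]
        _ = (F (q ^ n * x) * (1 - q ^ n * x)) * qPoch (a * x) q n := by ring
        _ = (F (q * (q ^ n * x)) * (1 - a * (q ^ n * x))) * qPoch (a * x) q n := by
            rw [hF]
            dsimp only
            rw [hfe]
        _ = F (q ^ (n + 1) * x) * qPoch (a * x) q (n + 1) := by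
            rw [hq1, e2]; ring
  -- limit of F (q^n x) is 1
  have tail : ∀ y : ℂ, ‖y‖ ≤ ‖x‖ → ‖F y - 1‖ ≤ qcBound a q * (1 - ‖x‖)⁻¹ * ‖y‖ := by
    intro y hy
    have hy1 : ‖y‖ < 1 := lt_of_le_of_lt hy hx
    have hsum := summable_qc a q y hq hy1
    have hzero : F y = qPoch a q 0 / qPoch q q 0 * y ^ 0
        + ∑' k : ℕ, qPoch a q (k + 1) / qPoch q q (k + 1) * y ^ (k + 1) := by
      rw [hF]
      exact Summable.tsum_eq_zero_add hsum
    have hc0 : qPoch a q 0 / qPoch q q 0 * y ^ 0 = 1 := by simp [qPoch]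
    have hFm1 : F y - 1 = ∑' k : ℕ, qPoch a q (k + 1) / qPoch q q (k + 1) * y ^ (k + 1) := by
      rw [hzero, hc0]; ring
    rw [hFm1]
    have hxnn : (0:ℝ) ≤ ‖x‖ := norm_nonneg x
    have hgs : HasSum (fun k : ℕ => qcBound a q * ‖x‖ ^ k * ‖y‖)
        (qcBound a q * (1 - ‖x‖)⁻¹ * ‖y‖) :=
      (((hasSum_geometric_of_lt_one hxnn hx).mul_left (qcBound a q)).mul_right ‖y‖)
    apply tsum_of_norm_bounded hgs
    intro k
    rw [norm_mul, norm_pow]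
    calc ‖qPoch a q (k + 1) / qPoch q q (k + 1)‖ * ‖y‖ ^ (k + 1)
        ≤ qcBound a q * ‖y‖ ^ (k + 1) :=
          mul_le_mul_of_nonneg_right (norm_qc_le a q hq _) (by positivity)
      _ = qcBound a q * ‖y‖ ^ k * ‖y‖ := by ring
      _ ≤ qcBound a q * ‖x‖ ^ k * ‖y‖ := by
          apply mul_le_mul_of_nonneg_right _ (norm_nonneg y)
          exact mul_le_mul_of_nonneg_left (pow_le_pow_left₀ (norm_nonneg y) hy k)
            (qcBound_nonneg a q)
  have hF0 : Tendsto (fun n : ℕ => F (q ^ n * x)) atTop (𝓝 1) := by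
    have hdiff : Tendsto (fun n : ℕ => F (q ^ n * x) - 1) atTop (𝓝 0) := by
      apply squeeze_zero_norm
        (a := fun n => qcBound a q * (1 - ‖x‖)⁻¹ * ‖x‖ * ‖q‖ ^ n)
      · intro n
        calc ‖F (q ^ n * x) - 1‖ ≤ qcBound a q * (1 - ‖x‖)⁻¹ * ‖q ^ n * x‖ :=
              tail _ (hnx n)
          _ = qcBound a q * (1 - ‖x‖)⁻¹ * (‖q‖ ^ n * ‖x‖) := by
              rw [norm_mul, norm_pow]
          _ = qcBound a q * (1 - ‖x‖)⁻¹ * ‖x‖ * ‖q‖ ^ n := by ring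
      · have := tendsto_pow_atTop_nhds_zero_of_lt_one (norm_nonneg q) hq
        simpa using this.const_mul (qcBound a q * (1 - ‖x‖)⁻¹ * ‖x‖)
    have := hdiff.add_const 1
    simpa using this
  -- products
  obtain ⟨hPx, hPxne⟩ := hasProd_one_sub x q hq
  obtain ⟨hPax, _⟩ := hasProd_one_sub (a * x) q hq
  have hxne : qPochInf x q ≠ 0 := by
    apply hPxne
    intro i
    apply one_sub_ne_zero'
    rw [norm_mul, norm_pow]
    calc ‖x‖ * ‖q‖ ^ i ≤ ‖x‖ * 1 :=
          mul_le_mul_of_nonneg_left (pow_le_one₀ (norm_nonneg q) hq.le) (norm_nonneg x)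
      _ = ‖x‖ := mul_one _
      _ < 1 := hx
  have hT1 : Tendsto (fun n : ℕ => F x * qPoch x q n) atTop (𝓝 (F x * qPochInf x q)) := by
    have := hPx.tendsto_prod_nat
    exact (this.const_mul (F x)).congr (fun n => by rw [qPoch])
  have hT2 : Tendsto (fun n : ℕ => F (q ^ n * x) * qPoch (a * x) q n) atTop
      (𝓝 (1 * qPochInf (a * x) q)) := by
    have := hPax.tendsto_prod_nat
    exact (hF0.mul this).congr (fun n => by rw [qPoch])
  have hT1' : Tendsto (fun n : ℕ => F x * qPoch x q n) atTop
      (𝓝 (1 * qPochInf (a * x) q)) := by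
    apply hT2.congr
    intro n
    exact (key n).symm
  have main : F x * qPochInf x q = 1 * qPochInf (a * x) q :=
    tendsto_nhds_unique hT1 hT1'
  rw [one_mul] at main
  rw [show (∑' k : ℕ, qPoch a q k / qPoch q q k * x ^ k) = F x from rfl,
    eq_div_iff hxne]
  exact main
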